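/- The normalization constants of the Pastro biorthogonality are given by the product formula: for every nonnegative integer n, ∏_{k=0}^{n-1} (1 - α_k β_k) = (a;q)_n (q;q)_n / ( (a b^{-1} q;q)_n (b;q)_n ), where α_k = -(a^{-1} b q)^{k+1} (a b^{-1};q)_{k+1} / (b;q)_{k+1} and β_k = -(a^{-1} b)^{-k-1} (b q^{-1};q)_{k+1} / (a b^{-1} q;q)_{k+1}. -/

import Mathlib

/-- The q-Pochhammer symbol `(z;q)_k = ∏_{j=0}^{k-1} (1 - z q^j)`. -/
noncomputable def qPoch (q z : ℝ) (k : ℕ) : ℝ :=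
  ∏ j ∈ Finset.range k, (1 - z * q ^ j)

lemma qPoch_succ (q z : ℝ) (k : ℕ) :
    qPoch q z (k + 1) = qPoch q z k * (1 - z * q ^ k) :=
  Finset.prod_range_succ _ _

lemma qPoch_succ' (q z : ℝ) (k : ℕ) :
    qPoch q z (k + 1) = (1 - z) * qPoch q (z * q) k := by
  rw [qPoch, Finset.prod_range_succ']
  simp only [pow_zero, mul_one]
  rw [mul_comm]
  congr 1
  apply Finset.prod_congr rfl
  intro j _
  ring

lemma qPoch_ne_zero (q z : ℝ) (h : ∀ j : ℕ, z * q ^ j ≠ 1) (k : ℕ) :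
    qPoch q z k ≠ 0 :=
  Finset.prod_ne_zero_iff.2 fun j _ => sub_ne_zero.2 fun hc => h j hc.symm

/-- Product formula for the normalization constants:
`∏_{k=0}^{n-1} (1 - α_k β_k) = (a;q)_n (q;q)_n / ((a b⁻¹ q;q)_n (b;q)_n)`. -/
theorem pastro_norm_product (q a b : ℝ) (hq : q ≠ 0) (hq1 : ∀ k : ℤ, k ≠ 0 → q ^ k ≠ 1)
    (ha : a ≠ 0) (hb : b ≠ 0)
    (hbq : ∀ m : ℤ, b * q ^ m ≠ 1) (habq : ∀ m : ℤ, a⁻¹ * b * q ^ m ≠ 1)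
    (n : ℕ) :
    ∏ k ∈ Finset.range n,
        (1 -
          (-(a⁻¹ * b * q) ^ (k + 1) * qPoch q (a * b⁻¹) (k + 1) / qPoch q b (k + 1)) *
          (-(a⁻¹ * b) ^ (-(k : ℤ) - 1) * qPoch q (b * q⁻¹) (k + 1) /
            qPoch q (a * b⁻¹ * q) (k + 1))) =
      qPoch q a n * qPoch q q n / (qPoch q (a * b⁻¹ * q) n * qPoch q b n) := by
  have hb' : ∀ j : ℕ, b * q ^ j ≠ 1 := fun j => by
    have := hbq (j : ℤ); rwa [zpow_natCast] at this
  have habq' : ∀ j : ℕ, (a * b⁻¹ * q) * q ^ j ≠ 1 := by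
    intro j hc
    apply habq (-(j : ℤ) - 1)
    have h1 : a⁻¹ * b * q ^ (-(j : ℤ) - 1) = (a * b⁻¹ * q * q ^ j)⁻¹ := by
      rw [zpow_sub₀ hq, zpow_neg, zpow_natCast, zpow_one]
      field_simp
    rw [h1, hc, inv_one]
  have hqPb : ∀ k : ℕ, qPoch q b k ≠ 0 := qPoch_ne_zero q b hb'
  have hqPab : ∀ k : ℕ, qPoch q (a * b⁻¹ * q) k ≠ 0 := qPoch_ne_zero q _ habq'
  have key : ∀ k ∈ Finset.range n,
      (1 -
          (-(a⁻¹ * b * q) ^ (k + 1) * qPoch q (a * b⁻¹) (k + 1) / qPoch q b (k + 1)) *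
          (-(a⁻¹ * b) ^ (-(k : ℤ) - 1) * qPoch q (b * q⁻¹) (k + 1) /
            qPoch q (a * b⁻¹ * q) (k + 1))) =
      ((1 - a * q ^ k) * (1 - q * q ^ k)) /
        ((1 - (a * b⁻¹ * q) * q ^ k) * (1 - b * q ^ k)) := by
    intro k _
    have hz : (a⁻¹ * b) ^ (-(k : ℤ) - 1) = ((a⁻¹ * b) ^ (k + 1) : ℝ)⁻¹ := by
      rw [← zpow_natCast (a⁻¹ * b) (k + 1), ← zpow_neg]
      congr 1
      push_cast
      ring
    have hbqq : b * q⁻¹ * q = b := by field_simp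
    have h1 := hqPb k
    have h2 := hqPab k
    have h3 : (1 - b * q ^ k) ≠ 0 := sub_ne_zero.2 fun hc => hb' k hc.symm
    have h4 : (1 - (a * b⁻¹ * q) * q ^ k) ≠ 0 := sub_ne_zero.2 fun hc => habq' k hc.symm
    have hX : ((a⁻¹ * b) ^ (k + 1) : ℝ) ≠ 0 :=
      pow_ne_zero _ (mul_ne_zero (inv_ne_zero ha) hb)
    have hαβ :
        (-(a⁻¹ * b * q) ^ (k + 1) * qPoch q (a * b⁻¹) (k + 1) / qPoch q b (k + 1)) *
          (-(a⁻¹ * b) ^ (-(k : ℤ) - 1) * qPoch q (b * q⁻¹) (k + 1) /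
            qPoch q (a * b⁻¹ * q) (k + 1)) =
        q ^ (k + 1) * ((1 - a * b⁻¹) * (1 - b * q⁻¹)) /
          ((1 - (a * b⁻¹ * q) * q ^ k) * (1 - b * q ^ k)) := by
      rw [hz, qPoch_succ' q (a * b⁻¹), qPoch_succ q b, qPoch_succ' q (b * q⁻¹), hbqq,
        qPoch_succ q (a * b⁻¹ * q), div_mul_div_comm,
        div_eq_div_iff (by positivity) (mul_ne_zero h4 h3), mul_pow]
      field_simp
    rw [hαβ, eq_div_iff (mul_ne_zero h4 h3), sub_mul, one_mul,
      div_mul_cancel₀ _ (mul_ne_zero h4 h3)]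
    field_simp
    ring
  rw [Finset.prod_congr rfl key, Finset.prod_div_distrib, Finset.prod_mul_distrib,
    Finset.prod_mul_distrib]
  rfl
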